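/- arXiv:1507.01831 — 2 statements merged into one kernel-verified Lean document; each statement's English description precedes it below -/
import Mathlib

section
/- If π and σ are permutations of ℕ with finite support whose supports overlap in exactly one point i (i.e. supp(π) ∩ supp(σ) = {i}), then the commutator σ⁻¹π⁻¹σπ is a 3-cycle, namely the cycle (i, σ⁻¹(i), π⁻¹(i)). -/
/-- If π and σ are finitely supported permutations of ℕ whose supports overlap in
exactly one point i, then the commutator σ⁻¹π⁻¹σπ is the 3-cycle (i, σ⁻¹(i), π⁻¹(i)). -/
theorem commutator_of_singleton_support_overlap_isThreeCycle
    (π σ : Equiv.Perm ℕ) (i : ℕ)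
    (hπ : {x | π x ≠ x}.Finite) (hσ : {x | σ x ≠ x}.Finite)
    (hover : {x | π x ≠ x} ∩ {x | σ x ≠ x} = {i}) :
    (i ≠ σ⁻¹ i ∧ σ⁻¹ i ≠ π⁻¹ i ∧ π⁻¹ i ≠ i) ∧
    (σ⁻¹ * π⁻¹ * σ * π) i = σ⁻¹ i ∧
    (σ⁻¹ * π⁻¹ * σ * π) (σ⁻¹ i) = π⁻¹ i ∧
    (σ⁻¹ * π⁻¹ * σ * π) (π⁻¹ i) = i ∧
    ∀ x : ℕ, x ≠ i → x ≠ σ⁻¹ i → x ≠ π⁻¹ i →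
      (σ⁻¹ * π⁻¹ * σ * π) x = x := by
  have hmem : ∀ x, π x ≠ x → σ x ≠ x → x = i := fun x h1 h2 => by
    have hx : x ∈ ({x | π x ≠ x} ∩ {x | σ x ≠ x}) := ⟨h1, h2⟩
    rw [hover] at hx
    exact hx
  have hi : i ∈ ({x | π x ≠ x} ∩ {x | σ x ≠ x}) := by rw [hover]; rfl
  have hπi : π i ≠ i := hi.1
  have hσi : σ i ≠ i := hi.2
  have invfix : ∀ (τ : Equiv.Perm ℕ) x, τ x = x → τ⁻¹ x = x := fun τ x h => by
    conv_lhs => rw [← h]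
    simp
  have hπinv : π⁻¹ i ≠ i := fun h => hπi (by conv_lhs => rw [← h]; simp)
  have hσinv : σ⁻¹ i ≠ i := fun h => hσi (by conv_lhs => rw [← h]; simp)
  have fixπ : ∀ x, x ≠ i → σ x ≠ x → π x = x := fun x hx hs =>
    by_contra fun h => hx (hmem x h hs)
  have fixσ : ∀ x, x ≠ i → π x ≠ x → σ x = x := fun x hx hp =>
    by_contra fun h => hx (hmem x hp h)
  have hne : σ⁻¹ i ≠ π⁻¹ i := by
    intro h
    have h1 : σ (σ⁻¹ i) = i := by simp
    have h2 : π (σ⁻¹ i) = i := by rw [h]; simp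
    have hs : σ (σ⁻¹ i) ≠ σ⁻¹ i := by rw [h1]; exact fun hh => hσinv hh.symm
    have hp : π (σ⁻¹ i) ≠ σ⁻¹ i := by rw [h2]; exact fun hh => hσinv hh.symm
    exact hσinv (hmem _ hp hs)
  -- π fixes σ⁻¹ i, σ fixes π⁻¹ i
  have hfix1 : π (σ⁻¹ i) = σ⁻¹ i := by
    apply fixπ _ hσinv
    have : σ (σ⁻¹ i) = i := by simp
    rw [this]; exact fun hh => hσinv hh.symm
  have hfix2 : σ (π⁻¹ i) = π⁻¹ i := by
    apply fixσ _ hπinv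
    have : π (π⁻¹ i) = i := by simp
    rw [this]; exact fun hh => hπinv hh.symm
  -- σ fixes π i, π fixes σ i
  have hfix3 : σ (π i) = π i := by
    apply fixσ _ hπi
    intro hh
    exact hπi (π.injective hh)
  have hfix4 : π (σ i) = σ i := by
    apply fixπ _ hσi
    intro hh
    exact hσi (σ.injective hh)
  refine ⟨⟨fun h => hσinv h.symm, hne, hπinv⟩, ?_, ?_, ?_, ?_⟩
  · simp [Equiv.Perm.mul_apply, hfix3]
  · simp [Equiv.Perm.mul_apply, show π (σ.symm i) = σ.symm i from hfix1,
      show σ.symm (π.symm i) = π.symm i from invfix σ _ hfix2]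
  · simp [Equiv.Perm.mul_apply, invfix π _ hfix4]
  · intro x hx1 hx2 hx3
    simp only [Equiv.Perm.mul_apply]
    by_cases hp : π x = x
    · by_cases hs : σ x = x
      · rw [hp, hs, invfix π _ hp, invfix σ _ hs]
      · -- x in supp σ only
        have hσx : σ x ≠ i := fun h => hx2 (by rw [← h]; simp)
        have hσxs : σ (σ x) ≠ σ x := fun h => hs (σ.injective h)
        have : π (σ x) = σ x := fixπ _ hσx hσxs
        rw [hp, invfix π _ this]
        simp
    · -- x in supp π only
      have hs : σ x = x := fixσ x hx1 hp
      have hπx : π x ≠ i := fun h => hx3 (by rw [← h]; simp)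
      have hπxs : π (π x) ≠ π x := fun h => hp (π.injective h)
      have : σ (π x) = π x := fixσ _ hπx hπxs
      rw [this]
      simp [invfix σ _ hs]
end

section
/- If G is a subgroup of S_∞ containing the group S_∞* of parity-preserving permutations together with at least one permutation σ that is not parity-preserving, then G = S_∞. -/
/-- The group `S_∞` of finitely supported permutations of the positive integers. -/
def Sinf : Subgroup (Equiv.Perm ℕ+) where
  carrier := {σ | {x | σ x ≠ x}.Finite}
  one_mem' := by
    simp only [Set.mem_setOf_eq, Equiv.Perm.one_apply, ne_eq, not_true_eq_false,
      Set.setOf_false]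
    exact Set.finite_empty
  mul_mem' := by
    intro a b ha hb
    refine Set.Finite.subset (ha.union hb) ?_
    intro x hx
    by_contra h
    simp only [Set.mem_union, Set.mem_setOf_eq, not_or, not_not] at h
    exact hx (by simp [Equiv.Perm.mul_apply, h.2, h.1])
  inv_mem' := by
    intro a ha
    refine Set.Finite.subset ha ?_
    intro x hx
    simp only [Set.mem_setOf_eq] at hx ⊢
    intro h
    exact hx (a.injective (by simp [h]))

/-- The set `S_∞*` of finitely supported parity-preserving permutations of ℕ₊. -/
def SinfStarSet : Set (Equiv.Perm ℕ+) :=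
  {σ | {x | σ x ≠ x}.Finite ∧ ∀ i : ℕ+, Even (i : ℕ) → Even (σ i : ℕ)}

/-- A transposition of two elements of the same parity is parity-preserving. -/
lemma swap_mem_star {a b : ℕ+} (h : Even (a : ℕ) ↔ Even (b : ℕ)) :
    Equiv.swap a b ∈ SinfStarSet := by
  constructor
  · apply Set.Finite.subset ((Set.finite_singleton b).insert a)
    intro x hx
    simp only [Set.mem_setOf_eq] at hx
    by_contra hmem
    simp only [Set.mem_insert_iff, Set.mem_singleton_iff, not_or] at hmem
    exact hx (Equiv.swap_apply_of_ne_of_ne hmem.1 hmem.2)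
  · intro i hi
    rcases eq_or_ne i a with rfl | ha
    · rw [Equiv.swap_apply_left]; exact h.mp hi
    rcases eq_or_ne i b with rfl | hb
    · rw [Equiv.swap_apply_right]; exact h.mpr hi
    · rw [Equiv.swap_apply_of_ne_of_ne ha hb]; exact hi

/-- There are infinitely many odd positive integers. -/
lemma odd_infinite : {x : ℕ+ | ¬ Even (x : ℕ)}.Infinite := by
  apply Set.infinite_of_injective_forall_mem
    (f := fun n : ℕ => (⟨2 * n + 1, by omega⟩ : ℕ+))
  · intro m n hmn
    rw [Subtype.mk_eq_mk] at hmn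
    omega
  · intro n
    show ¬ Even (2 * n + 1)
    rintro ⟨r, hr⟩
    omega

/-- If a subgroup G of S_∞ contains S_∞* together with a permutation that is not
parity-preserving, then G = S_∞. -/
theorem eq_sinf_of_sinfStar_le_and_not_parityPres (G : Subgroup (Equiv.Perm ℕ+))
    (hGle : (G : Set (Equiv.Perm ℕ+)) ⊆ ↑Sinf)
    (hstar : SinfStarSet ⊆ ↑G)
    (σ : Equiv.Perm ℕ+) (hσG : σ ∈ G)
    (hσ : ¬ ∀ i : ℕ+, Even (i : ℕ) → Even (σ i : ℕ)) :
    (G : Set (Equiv.Perm ℕ+)) = ↑Sinf := by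
  push_neg at hσ
  obtain ⟨i, hi, hσi⟩ := hσ
  have hσfin : {x | σ x ≠ x}.Finite := hGle hσG
  -- pick an odd j₂ fixed by σ, with j₂ ≠ σ i
  obtain ⟨j₂, hj₂odd, hj₂⟩ :=
    (odd_infinite.diff (hσfin.union (Set.finite_singleton (σ i)))).nonempty
  simp only [Set.mem_diff, Set.mem_union, Set.mem_setOf_eq, not_or, not_not,
    Set.mem_singleton_iff] at hj₂
  obtain ⟨hfix, hne⟩ := hj₂
  simp only [Set.mem_setOf_eq] at hj₂odd
  -- the base mixed-parity transposition (i, j₂) is in G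
  have hbase : Equiv.swap i j₂ ∈ G := by
    have h1 : Equiv.swap (σ i) j₂ ∈ G := hstar (swap_mem_star (by tauto))
    have h2 : σ⁻¹ * (Equiv.swap (σ i) j₂) * σ ∈ G := by
      exact G.mul_mem (G.mul_mem (G.inv_mem hσG) h1) hσG
    have : σ⁻¹ * Equiv.swap (σ i) j₂ * σ = Equiv.swap i j₂ := by
      have := Equiv.swap_apply_apply σ⁻¹ (σ i) j₂
      simp only [show σ⁻¹ (σ i) = i from σ.symm_apply_apply i] at this
      rw [show σ⁻¹ j₂ = j₂ from σ.injective (by simp [hfix]), inv_inv] at this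
      rw [← this]
    rwa [this] at h2
  have hij₂ : Even (i : ℕ) ∧ ¬ Even ((j₂ : ℕ)) := ⟨hi, hj₂odd⟩
  -- every transposition is in G
  have hswap : ∀ a b : ℕ+, Equiv.swap a b ∈ G := by
    intro a b
    by_cases hp : Even (a : ℕ) ↔ Even (b : ℕ)
    · exact hstar (swap_mem_star hp)
    -- mixed parity: wlog a even, b odd
    · rcases eq_or_ne a b with rfl | hab
      · tauto
      have key : ∀ a b : ℕ+, Even (a : ℕ) → ¬ Even (b : ℕ) → Equiv.swap a b ∈ G := by
        intro a b ha hb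
        set π : Equiv.Perm ℕ+ := Equiv.swap i a * Equiv.swap j₂ b with hπ
        have hπG : π ∈ G := G.mul_mem (hstar (swap_mem_star (by tauto)))
          (hstar (swap_mem_star (by tauto)))
        have hπi : π i = a := by
          have h1 : Equiv.swap j₂ b i = i :=
            Equiv.swap_apply_of_ne_of_ne (by rintro rfl; exact hj₂odd hi)
              (by rintro rfl; exact hb hi)
          have h2 : Equiv.swap i a i = a := Equiv.swap_apply_left i a
          simp [hπ, Equiv.Perm.mul_apply, h1, h2]
        have hπj₂ : π j₂ = b := by
          have h1 : Equiv.swap j₂ b j₂ = b := Equiv.swap_apply_left j₂ b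
          have h2 : Equiv.swap i a b = b :=
            Equiv.swap_apply_of_ne_of_ne (by rintro rfl; exact hb hi)
              (by rintro rfl; exact hb ha)
          simp [hπ, Equiv.Perm.mul_apply, h1, h2]
        have : π * Equiv.swap i j₂ * π⁻¹ = Equiv.swap a b := by
          rw [← Equiv.swap_apply_apply, hπi, hπj₂]
        rw [← this]
        exact G.mul_mem (G.mul_mem hπG hbase) (G.inv_mem hπG)
      rcases Nat.even_or_odd (a : ℕ) with ha | ha
      · exact key a b ha (fun hb => hp ⟨fun _ => hb, fun _ => ha⟩)
      · rcases Nat.even_or_odd (b : ℕ) with hb | hb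
        · rw [Equiv.swap_comm]
          exact key b a hb (Nat.not_even_iff_odd.mpr ha)
        · exact absurd (iff_of_false (Nat.not_even_iff_odd.mpr ha)
            (Nat.not_even_iff_odd.mpr hb)) hp
  -- conclude: every finitely supported permutation is in G
  apply Set.Subset.antisymm hGle
  intro τ hτ
  have hτfin : {x | τ x ≠ x}.Finite := hτ
  classical
  set s := hτfin.toFinset with hs
  have h₁ : ∀ x, (x ∈ s) ↔ (τ x ∈ s) := by
    intro x
    simp only [hs, Set.Finite.mem_toFinset, Set.mem_setOf_eq, ne_eq]
    constructor
    · intro h h'; exact h (τ.injective h')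
    · intro h h'; apply h; rw [h']; exact h'
  have h₂ : ∀ x, τ x ≠ x → x ∈ s := by
    intro x hx; simp [hs, Set.Finite.mem_toFinset, Set.mem_setOf_eq, hx]
  have hτeq : Equiv.Perm.ofSubtype (τ.subtypePerm (fun x => (h₁ x).symm)) = τ :=
    Equiv.Perm.ofSubtype_subtypePerm (fun x => (h₁ x).symm) h₂
  rw [← hτeq]
  have : ∀ g : Equiv.Perm {x // x ∈ s}, Equiv.Perm.ofSubtype g ∈ G := by
    intro g
    refine Equiv.Perm.swap_induction_on g ?_ ?_
    · simp only [map_one]; exact G.one_mem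
    · intro f x y _ ih
      rw [map_mul, Equiv.Perm.ofSubtype_swap_eq]
      exact G.mul_mem (hswap _ _) ih
  exact this _
end
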